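/- For half-integers M ≥ N ≥ 0 and m with |m| ≤ M, the vector identity sqrt(binom(2M, M+m)) |M,m⟩ = Σ_n sqrt(binom(2N, N+n) · binom(2M−2N, M−N+m−n)) |N,n⟩ ⊗ |M−N, m−n⟩ holds, where |M,m⟩ denotes the normalized completely symmetric state of 2M qubits with M+m qubits in state |0⟩ and M−m qubits in state |1⟩, and the sum runs over n with |n| ≤ N and |m−n| ≤ M−N. -/
import Mathlib


/-- Number of qubits in state `|0⟩` in a computational basis state `f`. -/
def zeros {ι : Type*} [Fintype ι] (f : ι → Fin 2) : ℕ :=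
  (Finset.univ.filter fun x => f x = 0).card

/-- The (coefficient function of the) normalized Dicke state of `card ι` qubits
with `k` qubits in state `|0⟩`: the symmetrization of `|0⟩^{⊗k} ⊗ |1⟩^{⊗(n−k)}`. -/
noncomputable def dicke {ι : Type*} [Fintype ι] (k : ℕ) (f : ι → Fin 2) : ℂ :=
  if zeros f = k then ((Real.sqrt (((Fintype.card ι).choose k : ℝ)) : ℝ) : ℂ)⁻¹ else 0

lemma dicke_of_eq {ι : Type*} [Fintype ι] {k : ℕ} {f : ι → Fin 2} (h : zeros f = k) :
    dicke k f = ((Real.sqrt (((Fintype.card ι).choose k : ℝ)) : ℝ) : ℂ)⁻¹ := if_pos h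

lemma dicke_of_ne {ι : Type*} [Fintype ι] {k : ℕ} {f : ι → Fin 2} (h : zeros f ≠ k) :
    dicke k f = 0 := if_neg h

lemma zeros_sum {α β : Type*} [Fintype α] [Fintype β] (f : α ⊕ β → Fin 2) :
    zeros f = zeros (f ∘ Sum.inl) + zeros (f ∘ Sum.inr) := by
  classical
  simp only [zeros, Finset.card_filter]
  rw [Fintype.sum_sum_type]
  rfl

lemma zeros_le {ι : Type*} [Fintype ι] (f : ι → Fin 2) : zeros f ≤ Fintype.card ι :=
  Finset.card_filter_le _ _

theorem dicke_splitting (p q a : ℕ) (ha : a ≤ p + q) (f : Fin p ⊕ Fin q → Fin 2) :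
    ((Real.sqrt (((p + q).choose a : ℝ)) : ℝ) : ℂ) * dicke a f
      = ∑ i ∈ Finset.range (a + 1),
          ((Real.sqrt ((p.choose i : ℝ) * (q.choose (a - i) : ℝ)) : ℝ) : ℂ) *
            (dicke i (f ∘ Sum.inl) * dicke (a - i) (f ∘ Sum.inr)) := by
  classical
  set z1 := zeros (f ∘ Sum.inl) with hz1
  set z2 := zeros (f ∘ Sum.inr) with hz2
  have hzsum : zeros f = z1 + z2 := zeros_sum f
  have hz1p : z1 ≤ p := by simpa using zeros_le (f ∘ Sum.inl)
  have hz2q : z2 ≤ q := by simpa using zeros_le (f ∘ Sum.inr)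
  by_cases hz : z1 + z2 = a
  · -- LHS = 1
    have hlhs : ((Real.sqrt (((p + q).choose a : ℝ)) : ℝ) : ℂ) * dicke a f = 1 := by
      rw [dicke_of_eq (by rw [hzsum, hz])]
      have hcpos : (0 : ℝ) < ((p + q).choose a : ℝ) := by
        exact_mod_cast Nat.choose_pos ha
      have hs : (0 : ℝ) < Real.sqrt ((p + q).choose a : ℝ) := Real.sqrt_pos.mpr hcpos
      have hcard : Fintype.card (Fin p ⊕ Fin q) = p + q := by simp
      rw [hcard, ← Complex.ofReal_inv, ← Complex.ofReal_mul, mul_inv_cancel₀ hs.ne']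
      norm_num
    rw [hlhs]
    rw [Finset.sum_eq_single z1]
    · have h2 : a - z1 = z2 := by omega
      rw [h2, dicke_of_eq rfl, dicke_of_eq rfl]
      have hc1 : (0 : ℝ) < (p.choose z1 : ℝ) := by exact_mod_cast Nat.choose_pos hz1p
      have hc2 : (0 : ℝ) < (q.choose z2 : ℝ) := by exact_mod_cast Nat.choose_pos hz2q
      have h1 : Fintype.card (Fin p) = p := by simp
      have h2' : Fintype.card (Fin q) = q := by simp
      rw [h1, h2', Real.sqrt_mul hc1.le]
      have hs1 : (0 : ℝ) < Real.sqrt (p.choose z1 : ℝ) := Real.sqrt_pos.mpr hc1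
      have hs2 : (0 : ℝ) < Real.sqrt (q.choose z2 : ℝ) := Real.sqrt_pos.mpr hc2
      rw [← Complex.ofReal_inv, ← Complex.ofReal_inv, ← Complex.ofReal_mul,
        ← Complex.ofReal_mul]
      have hr : Real.sqrt (p.choose z1 : ℝ) * Real.sqrt (q.choose z2 : ℝ) *
          ((Real.sqrt (p.choose z1 : ℝ))⁻¹ * (Real.sqrt (q.choose z2 : ℝ))⁻¹) = 1 := by
        field_simp
      rw [hr]
      norm_num
    · intro i _ hi
      rw [dicke_of_ne (fun h => hi (h.symm.trans rfl)), zero_mul, mul_zero]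
    · intro h
      exact absurd (Finset.mem_range.mpr (by omega)) h
  · -- both sides zero
    rw [dicke_of_ne (by rw [hzsum]; exact hz), mul_zero]
    symm
    apply Finset.sum_eq_zero
    intro i hi
    rcases eq_or_ne z1 i with h1 | h1
    · have h2 : z2 ≠ a - i := by
        intro h2
        apply hz
        have := Finset.mem_range.mp hi
        omega
      rw [dicke_of_ne h2, mul_zero, mul_zero]
    · rw [dicke_of_ne h1, zero_mul, mul_zero]
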